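/- Mass conservation along the discrete Hessian–Riemannian flow: let each g_{i,j} be continuously differentiable on ℝ⁴ and suppose Y : [0,S) → (states) is differentiable, has all density components M_k(s) strictly positive componentwise for every s ∈ [0,S), and satisfies the HRF equations on [0,S). Then for each k ∈ {1,…,N_T} the function s ↦ ⟨M_k(s), 1⟩_h is constant on [0,S); in particular, if ⟨M_k(0), 1⟩_h = 1 then ⟨M_k(s), 1⟩_h = 1 for all s ∈ [0,S). -/

import Mathlib

open scoped BigOperators

/-- Grid functions on the periodic `N × N` grid `(ℤ/Nℤ)²`. -/
abbrev Grid (N : ℕ) : Type := ZMod N → ZMod N → ℝ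

/-- Mesh size `h = 1/N`. -/
noncomputable def gridh (N : ℕ) : ℝ := 1 / N

/-- Discrete pairing `⟨a,b⟩_h = h² ∑_{i,j} a_{ij} b_{ij}`. -/
noncomputable def pairh (N : ℕ) [NeZero N] (a b : Grid N) : ℝ :=
  gridh N ^ 2 * ∑ i : ZMod N, ∑ j : ZMod N, a i j * b i j

/-- One-sided difference `(D₁⁺ y)_{ij} = (y_{i+1,j} - y_{ij}) / h`. -/
noncomputable def D1p (N : ℕ) (y : Grid N) : Grid N := fun i j => (y (i + 1) j - y i j) / gridh N

/-- One-sided difference `(D₁⁻ y)_{ij} = (y_{ij} - y_{i-1,j}) / h`. -/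
noncomputable def D1m (N : ℕ) (y : Grid N) : Grid N := fun i j => (y i j - y (i - 1) j) / gridh N

/-- One-sided difference `(D₂⁺ y)_{ij} = (y_{i,j+1} - y_{ij}) / h`. -/
noncomputable def D2p (N : ℕ) (y : Grid N) : Grid N := fun i j => (y i (j + 1) - y i j) / gridh N

/-- One-sided difference `(D₂⁻ y)_{ij} = (y_{ij} - y_{i,j-1}) / h`. -/
noncomputable def D2m (N : ℕ) (y : Grid N) : Grid N := fun i j => (y i j - y i (j - 1)) / gridh N

/-- Five-point discrete Laplacian. -/
noncomputable def lapFD (N : ℕ) (y : Grid N) : Grid N :=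
  fun i j => -(4 * y i j - y (i + 1) j - y (i - 1) j - y i (j + 1) - y i (j - 1)) / gridh N ^ 2

/-- Upwind stencil `[D_h y]_{ij} ∈ ℝ⁴`. -/
noncomputable def DHs (N : ℕ) (y : Grid N) (i j : ZMod N) : Fin 4 → ℝ :=
  ![D1p N y i j, D1m N y i j, D2p N y i j, D2m N y i j]

/-- `α^{(ℓ)}(U)_{ij} = (∂g_{ij}/∂q_ℓ)([D_h U]_{ij})`. -/
noncomputable def alphaFD (N : ℕ) (g : ZMod N → ZMod N → (Fin 4 → ℝ) → ℝ)
    (U : Grid N) (l : Fin 4) : Grid N :=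
  fun i j => fderiv ℝ (g i j) (DHs N U i j) (Pi.single l 1)

/-- Discrete transport operator `B_h(U, M)`. -/
noncomputable def Bh (N : ℕ) (g : ZMod N → ZMod N → (Fin 4 → ℝ) → ℝ) (U M : Grid N) : Grid N :=
  fun i j =>
    -D1m N (fun a b => M a b * alphaFD N g U 0 a b) i j
      - D1p N (fun a b => M a b * alphaFD N g U 1 a b) i j
      - D2m N (fun a b => M a b * alphaFD N g U 2 a b) i j
      - D2p N (fun a b => M a b * alphaFD N g U 3 a b) i j

/-- HJB residual block `r_k`. -/
noncomputable def rkFD (N : ℕ) (g : ZMod N → ZMod N → (Fin 4 → ℝ) → ℝ) (f : ℝ → ℝ)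
    (Vh : Grid N) (ν Δt : ℝ) (M U : ℕ → Grid N) (k : ℕ) : Grid N :=
  fun i j => (U k i j - U (k - 1) i j) / Δt + ν * lapFD N (U (k - 1)) i j
    - g i j (DHs N (U (k - 1)) i j) + f (M k i j) + Vh i j

/-- Fokker–Planck residual block `s_k`. -/
noncomputable def skFD (N : ℕ) (g : ZMod N → ZMod N → (Fin 4 → ℝ) → ℝ)
    (ν Δt : ℝ) (M U : ℕ → Grid N) (k : ℕ) : Grid N :=
  fun i j => (M k i j - M (k - 1) i j) / Δt - ν * lapFD N (M k) i j
    + Bh N g (U (k - 1)) (M k) i j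

/-- `r̄_k = ⟨M_k, r_k⟩_h / ⟨M_k, 1⟩_h`. -/
noncomputable def rbarFD (N : ℕ) [NeZero N] (g : ZMod N → ZMod N → (Fin 4 → ℝ) → ℝ) (f : ℝ → ℝ)
    (Vh : Grid N) (ν Δt : ℝ) (M U : ℕ → Grid N) (k : ℕ) : ℝ :=
  pairh N (M k) (rkFD N g f Vh ν Δt M U k) / pairh N (M k) (fun _ _ => 1)

/-- Entropy functional `E(Y)`. -/
noncomputable def entE (N : ℕ) [NeZero N] (NT : ℕ) (Δt : ℝ) (M U : ℕ → Grid N) : ℝ :=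
  Δt * ∑ k ∈ Finset.Icc 1 NT, pairh N (M k) (fun i j => Real.log (M k i j) - 1)
    + Δt / 2 * ∑ k ∈ Finset.range NT, pairh N (U k) (U k)

/-- Bregman divergence of the entropy, `D_E(Y*, Y)`. -/
noncomputable def DE (N : ℕ) [NeZero N] (NT : ℕ) (Δt : ℝ) (M' U' M U : ℕ → Grid N) : ℝ :=
  entE N NT Δt M' U' - entE N NT Δt M U
    - (Δt * ∑ k ∈ Finset.Icc 1 NT,
        pairh N (fun i j => Real.log (M k i j)) (fun i j => M' k i j - M k i j)
      + Δt * ∑ k ∈ Finset.range NT, pairh N (U k) (fun i j => U' k i j - U k i j))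

/-- The Hessian–Riemannian flow equations on a set `D` of artificial times. -/
def IsHRFOn (N : ℕ) [NeZero N] (NT : ℕ) (g : ZMod N → ZMod N → (Fin 4 → ℝ) → ℝ)
    (f : ℝ → ℝ) (Vh : Grid N) (ν Δt : ℝ)
    (Ms Us : ℝ → ℕ → Grid N) (D : Set ℝ) : Prop :=
  ∀ s ∈ D, ∀ k ∈ Finset.Icc 1 NT,
    (∀ i j, HasDerivWithinAt (fun t => Ms t k i j)
      (-(Ms s k i j) * (rkFD N g f Vh ν Δt (Ms s) (Us s) k i j
        - rbarFD N g f Vh ν Δt (Ms s) (Us s) k)) D s) ∧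
    (∀ i j, HasDerivWithinAt (fun t => Us t (k - 1) i j)
      (-(skFD N g ν Δt (Ms s) (Us s) k i j)) D s)

/-- mass conservation along the discrete Hessian–Riemannian flow. -/
theorem hrf_mass_conservation (N : ℕ) [NeZero N] (NT : ℕ) (hNT : 1 ≤ NT)
    (Δt ν : ℝ) (hΔt : 0 < Δt) (hν : 0 ≤ ν)
    (g : ZMod N → ZMod N → (Fin 4 → ℝ) → ℝ)
    (hg : ∀ i j, ContDiff ℝ 1 (g i j))
    (f : ℝ → ℝ) (Vh : Grid N)
    (S : ℝ) (hS : 0 < S)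
    (Ms Us : ℝ → ℕ → Grid N)
    (hposflow : ∀ s ∈ Set.Ico (0 : ℝ) S, ∀ k ∈ Finset.Icc 1 NT, ∀ i j, 0 < Ms s k i j)
    (hflow : IsHRFOn N NT g f Vh ν Δt Ms Us (Set.Ico 0 S)) :
    ∀ k ∈ Finset.Icc 1 NT,
      (∀ s ∈ Set.Ico (0 : ℝ) S, ∀ s' ∈ Set.Ico (0 : ℝ) S,
        pairh N (Ms s k) (fun _ _ => 1) = pairh N (Ms s' k) (fun _ _ => 1)) ∧
      (pairh N (Ms 0 k) (fun _ _ => 1) = 1 →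
        ∀ s ∈ Set.Ico (0 : ℝ) S, pairh N (Ms s k) (fun _ _ => 1) = 1) := by
  intro k hk
  have hNpos : (0 : ℝ) < N := by
    exact_mod_cast Nat.pos_of_ne_zero (NeZero.ne N)
  have hh : (0 : ℝ) < gridh N ^ 2 := by
    have : (0 : ℝ) < gridh N := by
      unfold gridh; positivity
    positivity
  have hpos : ∀ s ∈ Set.Ico (0 : ℝ) S, 0 < pairh N (Ms s k) (fun _ _ => 1) := by
    intro s hs
    unfold pairh
    apply mul_pos hh
    apply Finset.sum_pos _ Finset.univ_nonempty
    intro i _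
    apply Finset.sum_pos _ Finset.univ_nonempty
    intro j _
    simpa using hposflow s hs k hk i j
  -- derivative of the mass is zero
  have key : ∀ s ∈ Set.Ico (0 : ℝ) S,
      HasDerivWithinAt (fun t => pairh N (Ms t k) (fun _ _ => 1)) 0 (Set.Ico 0 S) s := by
    intro s hs
    have hM := (hflow s hs k hk).1
    set r := rkFD N g f Vh ν Δt (Ms s) (Us s) k with hr
    set rb := rbarFD N g f Vh ν Δt (Ms s) (Us s) k with hrb
    have h1 : HasDerivWithinAt
        (fun t => ∑ i : ZMod N, ∑ j : ZMod N, Ms t k i j * 1)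
        (∑ i : ZMod N, ∑ j : ZMod N, -(Ms s k i j) * (r i j - rb))
        (Set.Ico 0 S) s := by
      apply HasDerivWithinAt.fun_sum
      intro i _
      apply HasDerivWithinAt.fun_sum
      intro j _
      simpa [mul_one] using hM i j
    have h2 := h1.const_mul (gridh N ^ 2)
    have hzero : gridh N ^ 2 * ∑ i : ZMod N, ∑ j : ZMod N,
        -(Ms s k i j) * (r i j - rb) = 0 := by
      have hexp : ∀ i j : ZMod N, -(Ms s k i j) * (r i j - rb)
          = rb * (Ms s k i j * 1) - Ms s k i j * r i j := by
        intro i j; ring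
      simp_rw [hexp, Finset.sum_sub_distrib, ← Finset.mul_sum]
      have hne : pairh N (Ms s k) (fun _ _ => 1) ≠ 0 := (hpos s hs).ne'
      have hrbdef : rb * pairh N (Ms s k) (fun _ _ => 1)
          = pairh N (Ms s k) r := by
        rw [hrb, rbarFD, div_mul_cancel₀ _ hne]
      have := hrbdef
      unfold pairh at this
      nlinarith [this]
    have h3 : HasDerivWithinAt (fun t => pairh N (Ms t k) (fun _ _ => 1)) 0 (Set.Ico 0 S) s := by
      have h2' := h2
      rw [hzero] at h2'
      simpa [pairh] using h2'
    exact h3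
  have hconst : ∀ s ∈ Set.Ico (0 : ℝ) S, ∀ s' ∈ Set.Ico (0 : ℝ) S,
      pairh N (Ms s k) (fun _ _ => 1) = pairh N (Ms s' k) (fun _ _ => 1) := by
    intro s hs s' hs'
    have hconv : Convex ℝ (Set.Ico (0 : ℝ) S) := convex_Ico 0 S
    have hdiff : DifferentiableOn ℝ (fun t => pairh N (Ms t k) (fun _ _ => 1))
        (Set.Ico 0 S) := fun x hx => ((key x hx).differentiableWithinAt)
    apply hconv.is_const_of_fderivWithin_eq_zero hdiff _ hs hs'
    intro x hx
    have := (key x hx).hasFDerivWithinAt.fderivWithin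
      (uniqueDiffOn_Ico 0 S x hx)
    rw [this]
    ext v
    simp
  refine ⟨hconst, ?_⟩
  intro h0 s hs
  rw [hconst s hs 0 ⟨le_refl 0, hS⟩, h0]
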